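/- Let G be the directed graph with two vertices v₁, v₂, a loop a₁ at v₁, a loop a₂ at v₂, an edge b₁ from v₁ to v₂ and an edge b₂ from v₂ to v₁, and let H be the graph with one vertex v and two loops a, b. Let π be the graph homomorphism sending v₁,v₂ ↦ v, a₁,a₂ ↦ a, b₁,b₂ ↦ b. Then the induced map on bi-infinite edge sequences π: Σ_G → Σ_H (where Σ_G is the set of bi-infinite paths (eᵏ)_{k∈ℤ} with t(eᵏ)=i(eᵏ⁺¹), and π applied coordinatewise) is a well-defined surjection commuting with the left shift, and is exactly 2-to-1: every point of Σ_H has precisely two preimages. -/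

import Mathlib

/-- Edges of the graph `G`: an edge is the pair (initial vertex, terminal vertex),
with vertices `Bool` (`false = v₁`, `true = v₂`).  The four edges are
`a₁ = (false,false)`, `a₂ = (true,true)`, `b₁ = (false,true)`, `b₂ = (true,false)`. -/
abbrev EdgeG := Bool × Bool

/-- The shift of finite type of `G`: bi-infinite edge paths. -/
def SigG : Type := {e : ℤ → EdgeG // ∀ k, (e k).2 = (e (k + 1)).1}

/-- The shift of finite type of `H` (one vertex, two loops `a = false`, `b = true`):
every bi-infinite edge sequence is a path. -/
def SigH : Type := ℤ → Bool

/-- The graph homomorphism on edges: loops `a₁, a₂ ↦ a`, the edges `b₁, b₂ ↦ b`. -/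
def piE (e : EdgeG) : Bool := xor e.1 e.2

/-- The induced map on bi-infinite paths, applied coordinatewise. -/
def piSig (e : SigG) : SigH := fun k => piE (e.val k)

/-- The left shift on `Σ_G`. -/
def shiftG (e : SigG) : SigG := ⟨fun k => e.val (k + 1), fun k => e.prop (k + 1)⟩

/-- The left shift on `Σ_H`. -/
def shiftH (h : SigH) : SigH := fun k => h (k + 1)

/-- Vertex function at nonnegative times. -/
def Vpos (h : SigH) (b : Bool) : ℕ → Bool
  | 0 => b
  | n + 1 => xor (Vpos h b n) (h n)

/-- Vertex function at negative times: `Vneg n = V (-(n+1))`. -/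
def Vneg (h : SigH) (b : Bool) : ℕ → Bool
  | 0 => xor b (h (-1))
  | n + 1 => xor (Vneg h b n) (h (-(n + 2)))

/-- The vertex function: vertex visited at time `k` by the lift of `h` starting at `b`. -/
def V (h : SigH) (b : Bool) : ℤ → Bool
  | Int.ofNat n => Vpos h b n
  | Int.negSucc n => Vneg h b n

lemma V_zero (h : SigH) (b : Bool) : V h b 0 = b := rfl

lemma V_succ (h : SigH) (b : Bool) (k : ℤ) : V h b (k + 1) = xor (V h b k) (h k) := by
  cases k with
  | ofNat n =>
      show V h b (Int.ofNat (n + 1)) = _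
      rfl
  | negSucc n =>
      cases n with
      | zero =>
          show V h b 0 = xor (Vneg h b 0) (h (-1))
          simp [V_zero, Vneg, Bool.xor_assoc]
      | succ m =>
          show V h b (Int.negSucc m) = xor (Vneg h b (m + 1)) (h (Int.negSucc (m + 1)))
          have : (Int.negSucc (m + 1)) = (-(m + 2) : ℤ) := rfl
          simp [V, Vneg, this, Bool.xor_assoc]

/-- Uniqueness of a function on ℤ satisfying the recurrence. -/
lemma V_unique (h : SigH) (f g : ℤ → Bool) (h0 : f 0 = g 0)
    (hf : ∀ k, f (k + 1) = xor (f k) (h k))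
    (hg : ∀ k, g (k + 1) = xor (g k) (h k)) : ∀ k, f k = g k := by
  intro k
  induction k using Int.induction_on with
  | zero => exact h0
  | succ n ih => rw [hf, hg, ih]
  | pred n ih =>
      have hf' := hf (-(n+1) : ℤ)
      have hg' := hg (-(n+1) : ℤ)
      have e : (-(n+1) : ℤ) + 1 = -n := by ring
      rw [e] at hf' hg'
      rw [ih] at hf'
      have hcancel : f (-(n+1) : ℤ) = g (-(n+1) : ℤ) := by
        have h2 := hf'.symm.trans hg'
        cases hb : h (-(n+1) : ℤ) <;> rw [hb] at h2 <;> simpa using h2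
      have e2 : (-(n : ℤ) - 1) = -((n : ℤ) + 1) := by ring
      rw [e2]
      exact hcancel

/-- The lift of `h` starting at vertex `b`. -/
def lift (h : SigH) (b : Bool) : SigG :=
  ⟨fun k => (V h b k, V h b (k + 1)), fun _ => rfl⟩

lemma piSig_lift (h : SigH) (b : Bool) : piSig (lift h b) = h := by
  funext k
  show xor (V h b k) (V h b (k + 1)) = h k
  rw [V_succ]
  cases V h b k <;> cases h k <;> rfl

theorem stmt13 :
    (∀ e : SigG, piSig (shiftG e) = shiftH (piSig e)) ∧
    Function.Surjective piSig ∧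
    (∀ h : SigH, Nat.card {e : SigG // piSig e = h} = 2) := by
  refine ⟨fun e => rfl, fun h => ⟨lift h false, piSig_lift h false⟩, fun h => ?_⟩
  have key : ∀ e : SigG, piSig e = h → e = lift h ((e.val 0).1) := by
    intro e he
    have hrec : ∀ k, (e.val (k + 1)).1 = xor ((e.val k).1) (h k) := by
      intro k
      rw [← e.prop k, ← he]
      show _ = xor ((e.val k).1) (xor (e.val k).1 (e.val k).2)
      cases hx : (e.val k).1 <;> cases hy : (e.val k).2 <;> simp [hx, hy]
    have huniq := V_unique h (fun k => (e.val k).1) (V h ((e.val 0).1))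
      rfl hrec (fun k => V_succ h _ k)
    apply Subtype.ext
    funext k
    have h1 : (e.val k).1 = V h ((e.val 0).1) k := huniq k
    have h2 : (e.val k).2 = V h ((e.val 0).1) (k + 1) := by
      rw [e.prop k]; exact huniq (k + 1)
    show e.val k = (V h ((e.val 0).1) k, V h ((e.val 0).1) (k + 1))
    rw [← h1, ← h2]
  have equiv : {e : SigG // piSig e = h} ≃ Bool :=
    { toFun := fun e => ((e.val.val 0).1)
      invFun := fun b => ⟨lift h b, piSig_lift h b⟩
      left_inv := fun e => Subtype.ext (key e.val e.prop).symm
      right_inv := fun b => rfl }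
  rw [Nat.card_eq_of_equiv_fin (equiv.trans finTwoEquiv.symm)]
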